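/- Let 0 < D_m < D_n and N > 0. The function φ(y) = D_m·(y - 1) + (D_n - D_m)·e^(N/(D_n-D_m))·(y^(-D_m/(D_n-D_m)) - 1) is monotonically decreasing on [1, e^(N/D_n)]. -/

import Mathlib

theorem stmt_11 (Dm Dn N : ℝ) (hDm : 0 < Dm) (hDmn : Dm < Dn) (hN : 0 < N) :
    AntitoneOn
      (fun y : ℝ => Dm * (y - 1)
        + (Dn - Dm) * Real.exp (N / (Dn - Dm)) * (y ^ (-(Dm / (Dn - Dm))) - 1))
      (Set.Icc 1 (Real.exp (N / Dn))) := by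
  have hs0 : 0 < Dn - Dm := by linarith
  have hDn : 0 < Dn := hDm.trans hDmn
  set p : ℝ := -(Dm / (Dn - Dm)) with hp
  set C : ℝ := (Dn - Dm) * Real.exp (N / (Dn - Dm)) with hC
  have hd : ∀ x : ℝ, 0 < x → HasDerivAt
      (fun y : ℝ => Dm * (y - 1) + C * (y ^ p - 1))
      (Dm + C * (p * x ^ (p - 1))) x := by
    intro x hx
    have h1 : HasDerivAt (fun y : ℝ => Dm * (y - 1)) (Dm * 1) x :=
      ((hasDerivAt_id x).sub_const 1).const_mul Dm
    have h2 : HasDerivAt (fun y : ℝ => y ^ p) (p * x ^ (p - 1)) x :=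
      Real.hasDerivAt_rpow_const (Or.inl (ne_of_gt hx))
    have h3 : HasDerivAt (fun y : ℝ => C * (y ^ p - 1)) (C * (p * x ^ (p - 1))) x :=
      (h2.sub_const 1).const_mul C
    have h4 := h1.add h3
    rw [mul_one] at h4
    exact h4
  apply antitoneOn_of_deriv_nonpos (convex_Icc _ _)
  · apply ContinuousOn.add (by fun_prop)
    apply ContinuousOn.mul continuousOn_const
    apply ContinuousOn.sub _ continuousOn_const
    apply ContinuousOn.rpow_const continuousOn_id
    intro x hx
    exact Or.inl (by simp at hx ⊢; linarith [hx.1])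
  · intro x hx
    rw [interior_Icc] at hx
    exact ((hd x (by linarith [hx.1])).differentiableAt).differentiableWithinAt
  · intro x hx
    rw [interior_Icc] at hx
    have hx1 : (1:ℝ) < x := hx.1
    have hx0 : (0:ℝ) < x := by linarith
    rw [(hd x hx0).deriv]
    -- C * p = -Dm * exp (N/(Dn-Dm))
    have hCp : C * p = -Dm * Real.exp (N / (Dn - Dm)) := by
      rw [hC, hp]; field_simp
    have hp1 : p - 1 = -(Dn / (Dn - Dm)) := by
      rw [hp]; field_simp; ring
    -- key : x ^ (Dn/(Dn-Dm)) ≤ exp (N/(Dn-Dm))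
    have hkey : x ^ (Dn / (Dn - Dm)) ≤ Real.exp (N / (Dn - Dm)) := by
      have h1 : x ^ (Dn / (Dn - Dm)) ≤ (Real.exp (N / Dn)) ^ (Dn / (Dn - Dm)) :=
        Real.rpow_le_rpow (le_of_lt hx0) (le_of_lt hx.2) (by positivity)
      calc x ^ (Dn / (Dn - Dm)) ≤ (Real.exp (N / Dn)) ^ (Dn / (Dn - Dm)) := h1
        _ = Real.exp (N / Dn * (Dn / (Dn - Dm))) := (Real.exp_mul _ _).symm
        _ = Real.exp (N / (Dn - Dm)) := by congr 1; field_simp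
    have hxq : (0:ℝ) < x ^ (Dn / (Dn - Dm)) := Real.rpow_pos_of_pos hx0 _
    have h2 : (1:ℝ) ≤ Real.exp (N / (Dn - Dm)) * x ^ (-(Dn / (Dn - Dm))) := by
      rw [Real.rpow_neg (le_of_lt hx0), ← div_eq_mul_inv,
        le_div_iff₀ hxq, one_mul]
      exact hkey
    have : Dm + C * (p * x ^ (p - 1))
        = Dm * (1 - Real.exp (N / (Dn - Dm)) * x ^ (-(Dn / (Dn - Dm)))) := by
      rw [hp1, ← mul_assoc, hCp]; ring
    rw [this]
    have : 1 - Real.exp (N / (Dn - Dm)) * x ^ (-(Dn / (Dn - Dm))) ≤ 0 := by linarith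
    exact mul_nonpos_of_nonneg_of_nonpos (le_of_lt hDm) this
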